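/- Fix an integer n ≥ 2 and reals b₁ > b₂ ≥ … ≥ bₙ > 0, and fix r₂, …, rₙ > 0. Then τ₁(r₁, r₂, …, rₙ) tends to 2π/b₁ as r₁ → 0⁺. -/

import Mathlib

set_option maxHeartbeats 1000000

open Real Finset Set Filter

lemma tan_cubic_lt {x : ℝ} (hx : 0 < x) (hx2 : x < Real.pi/2) :
    x + x^3/3 < Real.tan x := by
  set f : ℝ → ℝ := fun y => Real.tan y - (y + y^3/3) with hf
  have key : StrictMonoOn f (Set.Ico 0 (Real.pi/2)) := by
    apply strictMonoOn_of_deriv_pos (convex_Ico _ _)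
    · apply ContinuousOn.sub
      · apply Real.continuousOn_tan.mono
        intro y hy
        simp only [Set.mem_setOf_eq]
        exact (Real.cos_pos_of_mem_Ioo ⟨by linarith [hy.1, Real.pi_pos], hy.2⟩).ne'
      · fun_prop
    · intro y hy
      rw [interior_Ico] at hy
      have hypos : 0 < y := hy.1
      have hcospos : 0 < Real.cos y :=
        Real.cos_pos_of_mem_Ioo ⟨by linarith [hy.1, Real.pi_pos], hy.2⟩
      have hcos : Real.cos y ≠ 0 := hcospos.ne'
      have hd : HasDerivAt f (1 / Real.cos y ^ 2 - (1 + y^2)) y := by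
        have h1 := Real.hasDerivAt_tan hcos
        have h2 : HasDerivAt (fun y : ℝ => y + y^3/3) (1 + y^2) y := by
          have h3 : HasDerivAt (fun y : ℝ => y + y^3/3) (1 + ((3:ℕ) * y^(3-1))/3) y :=
            (hasDerivAt_id' y).add ((hasDerivAt_pow 3 y).div_const 3)
        
          convert h3 using 1
          norm_num
        exact h1.sub h2
      rw [hd.deriv]
      have hsinpos : 0 < Real.sin y := Real.sin_pos_of_pos_of_lt_pi hypos (by linarith [Real.pi_pos, hy.2])
      have htan : y < Real.tan y := Real.lt_tan hypos hy.2
      have hys : y * Real.cos y < Real.sin y := by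
        rw [Real.tan_eq_sin_div_cos, lt_div_iff₀ hcospos] at htan
        linarith
      have hpyth := Real.sin_sq_add_cos_sq y
      rw [sub_pos, lt_div_iff₀ (by positivity)]
      nlinarith [mul_pos hypos hcospos]
  have h0 : f 0 = 0 := by simp [hf]
  have := key (Set.left_mem_Ico.2 (by linarith [Real.pi_pos])) ⟨hx.le, hx2⟩ hx
  rw [h0] at this
  simp only [hf] at this
  linarith

lemma g_pos {x : ℝ} (h0 : 0 < x) (hpi : x < Real.pi) :
    0 < 6*x*Real.sin x - 4*x^2*Real.cos x - 2*(Real.sin x)^2*Real.cos x := by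
  have hs : 0 < Real.sin x := Real.sin_pos_of_pos_of_lt_pi h0 hpi
  rcases le_or_gt (Real.cos x) 0 with hc | hc
  · nlinarith [sq_nonneg (Real.sin x), sq_nonneg x, mul_pos h0 hs]
  · have hx2 : x < Real.pi/2 := by
      by_contra h
      push_neg at h
      have := Real.cos_nonpos_of_pi_div_two_le_of_le h (by linarith [Real.pi_pos])
      linarith
    have htan := tan_cubic_lt h0 hx2
    have hsin : Real.sin x < x := Real.sin_lt h0
    have hsc : Real.sin x = Real.cos x * Real.tan x := by
      rw [Real.tan_eq_sin_div_cos]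
      field_simp
    have hkey : 0 < 6*x*Real.tan x - 4*x^2 - 2*(Real.sin x)^2 := by
      nlinarith [mul_lt_mul_of_pos_left htan (by linarith : (0:ℝ) < 6*x),
        mul_pos (sub_pos.2 hsin) (by positivity : (0:ℝ) < x + Real.sin x),
        pow_pos h0 4]
    nlinarith [mul_pos hc hkey]

lemma term_pos {β τ : ℝ} (hb : 0 < β) (ht : 0 < τ) (h2 : β*τ < 2*Real.pi) :
    0 < 3*τ - β*τ^2*Real.cos (β*τ/2)/Real.sin (β*τ/2) - Real.sin (β*τ)/β := by
  have hs : 0 < Real.sin (β*τ/2) :=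
    Real.sin_pos_of_pos_of_lt_pi (by positivity) (by linarith)
  have hg := g_pos (x := β*τ/2) (by positivity) (by linarith)
  have hsin2 : Real.sin (β*τ) = 2*Real.sin (β*τ/2)*Real.cos (β*τ/2) := by
    have := Real.sin_two_mul (β*τ/2)
    rw [show 2*(β*τ/2) = β*τ by ring] at this
    exact this
  have heq : 3*τ - β*τ^2*Real.cos (β*τ/2)/Real.sin (β*τ/2) - Real.sin (β*τ)/β
      = (6*(β*τ/2)*Real.sin (β*τ/2) - 4*(β*τ/2)^2*Real.cos (β*τ/2)
          - 2*(Real.sin (β*τ/2))^2*Real.cos (β*τ/2)) / (β*Real.sin (β*τ/2)) := by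
    rw [hsin2]
    have hs' : Real.sin (β*τ/2) ≠ 0 := hs.ne'
    generalize Real.sin (β*τ/2) = s at hs' ⊢
    have hb' : β ≠ 0 := hb.ne'
    field_simp
    ring
  rw [heq]
  exact div_pos hg (by positivity)

lemma inv_nhds_neg_atBot : Tendsto (fun x : ℝ => x⁻¹) (nhdsWithin 0 (Set.Iio 0)) atBot := by
  have hneg : Tendsto (fun x : ℝ => -x) (nhdsWithin 0 (Set.Iio 0)) (nhdsWithin 0 (Set.Ioi 0)) := by
    apply tendsto_nhdsWithin_of_tendsto_nhds_of_eventually_within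
    · simpa using (continuous_neg.tendsto (0:ℝ)).mono_left nhdsWithin_le_nhds
    · filter_upwards [self_mem_nhdsWithin] with x hx
      simpa using hx
  have h1 := tendsto_inv_nhdsGT_zero.comp hneg
  have h2 := tendsto_neg_atTop_atBot.comp h1
  refine h2.congr fun x => ?_
  simp only [Function.comp_apply]
  rw [inv_neg, neg_neg]

lemma psi_term1_atBot {β : ℝ} (hβ : 0 < β) :
    Tendsto (fun τ => 3*τ - β*τ^2*Real.cos (β*τ/2)/Real.sin (β*τ/2) - Real.sin (β*τ)/β)
      (nhdsWithin (2*Real.pi/β) (Set.Ioi (2*Real.pi/β))) atBot := by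
  have hπ := Real.pi_pos
  set c := 2*Real.pi/β with hc
  have hcpos : 0 < c := by positivity
  have hbc : β * c = 2*Real.pi := by rw [hc]; field_simp
  have harg : β*c/2 = Real.pi := by linarith
  have hden0 : Tendsto (fun τ => Real.sin (β*τ/2)) (nhdsWithin c (Set.Ioi c)) (nhds 0) := by
    have hcont : Continuous fun τ : ℝ => Real.sin (β*τ/2) := by fun_prop
    have h := (hcont.tendsto c).mono_left (nhdsWithin_le_nhds (s := Set.Ioi c))
    rwa [harg, Real.sin_pi] at h
  have hdenneg : ∀ᶠ τ in nhdsWithin c (Set.Ioi c), Real.sin (β*τ/2) < 0 := by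
    filter_upwards [Ioo_mem_nhdsGT_of_mem (Set.left_mem_Ico.2 (by linarith : c < 2*c))] with τ hτ
    have hl := mul_lt_mul_of_pos_left hτ.1 hβ
    have hu := mul_lt_mul_of_pos_left hτ.2 hβ
    have h1 : Real.pi < β*τ/2 := by nlinarith
    have h2 : β*τ/2 < 2*Real.pi := by nlinarith
    have := Real.sin_neg_of_neg_of_neg_pi_lt (x := β*τ/2 - 2*Real.pi) (by linarith) (by linarith)
    rwa [Real.sin_sub_two_pi] at this
  have hdenIio : Tendsto (fun τ => Real.sin (β*τ/2)) (nhdsWithin c (Set.Ioi c))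
      (nhdsWithin 0 (Set.Iio 0)) :=
    tendsto_nhdsWithin_of_tendsto_nhds_of_eventually_within _ hden0 hdenneg
  have hinv : Tendsto (fun τ => (Real.sin (β*τ/2))⁻¹) (nhdsWithin c (Set.Ioi c)) atBot :=
    inv_nhds_neg_atBot.comp hdenIio
  have hnum : Tendsto (fun τ => β*τ^2*Real.cos (β*τ/2)) (nhdsWithin c (Set.Ioi c))
      (nhds (-(β*c^2))) := by
    have hcont : Continuous fun τ : ℝ => β*τ^2*Real.cos (β*τ/2) := by fun_prop
    have h := (hcont.tendsto c).mono_left (nhdsWithin_le_nhds (s := Set.Ioi c))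
    rw [harg, Real.cos_pi] at h
    simpa using h
  have hQ : Tendsto (fun τ => β*τ^2*Real.cos (β*τ/2)/Real.sin (β*τ/2))
      (nhdsWithin c (Set.Ioi c)) atTop := by
    have h := Filter.Tendsto.neg_mul_atBot (show -(β*c^2) < 0 by nlinarith) hnum hinv
    refine h.congr fun τ => ?_
    exact (div_eq_mul_inv _ _).symm
  have hrest : Tendsto (fun τ => 3*τ - Real.sin (β*τ)/β) (nhdsWithin c (Set.Ioi c))
      (nhds (3*c - Real.sin (β*c)/β)) := by
    have hcont : Continuous fun τ : ℝ => 3*τ - Real.sin (β*τ)/β := by fun_prop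
    exact (hcont.tendsto c).mono_left nhdsWithin_le_nhds
  have h := hrest.add_atBot (tendsto_neg_atTop_atBot.comp hQ)
  refine h.congr fun τ => ?_
  simp only [Function.comp]
  ring

lemma psi_aux_contOn (s : Finset ℕ) (b ρ : ℕ → ℝ) (K : Set ℝ)
    (hsin : ∀ τ ∈ K, ∀ i ∈ s, Real.sin (b i * τ/2) ≠ 0) :
    ContinuousOn (fun τ => ∑ i ∈ s, (ρ i)^2/2 *
      (3*τ - b i*τ^2*Real.cos (b i*τ/2)/Real.sin (b i*τ/2) - Real.sin (b i*τ)/b i)) K := by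
  apply continuousOn_finset_sum
  intro i hi
  apply ContinuousOn.mul continuousOn_const
  apply ContinuousOn.sub
  · apply ContinuousOn.sub
    · fun_prop
    · apply ContinuousOn.div
      · fun_prop
      · fun_prop
      · intro τ hτ
        exact hsin τ hτ i hi
  · fun_prop

/-- `ψ(τ, r) = Σ_{i=1}^{n} (rᵢ²/2)·(3τ − bᵢτ²·cos(bᵢτ/2)/sin(bᵢτ/2) − sin(bᵢτ)/bᵢ)`. -/
noncomputable def psiSum (n : ℕ) (b r : ℕ → ℝ) (τ : ℝ) : ℝ :=
  ∑ i ∈ Finset.Icc 1 n, (r i) ^ 2 / 2 *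
    (3 * τ - b i * τ ^ 2 * Real.cos (b i * τ / 2) / Real.sin (b i * τ / 2) -
      Real.sin (b i * τ) / b i)

lemma psiSum0 (n : ℕ) (b r : ℕ → ℝ) (τ : ℝ) : psiSum n b r τ =
    ∑ i ∈ Finset.Icc 1 n, (r i) ^ 2 / 2 *
      (3 * τ - b i * τ ^ 2 * Real.cos (b i * τ / 2) / Real.sin (b i * τ / 2) -
        Real.sin (b i * τ) / b i) := rfl

lemma psiSum_update (n : ℕ) (hn : 1 ≤ n) (b r : ℕ → ℝ) (r₁ τ : ℝ) :
    psiSum n b (Function.update r 1 r₁) τ =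
      r₁^2/2 * (3*τ - b 1*τ^2*Real.cos (b 1*τ/2)/Real.sin (b 1*τ/2) - Real.sin (b 1*τ)/b 1)
      + ∑ i ∈ Finset.Icc 2 n, (r i)^2/2 *
          (3*τ - b i*τ^2*Real.cos (b i*τ/2)/Real.sin (b i*τ/2) - Real.sin (b i*τ)/b i) := by
  rw [psiSum0, show Finset.Icc 1 n = insert 1 (Finset.Icc 2 n) by
      ext i; simp only [Finset.mem_insert, Finset.mem_Icc]; omega,
    Finset.sum_insert (by simp [Finset.mem_Icc]), Function.update_self]
  congr 1
  apply Finset.sum_congr rfl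
  intro i hi
  have hne : i ≠ 1 := by simp only [Finset.mem_Icc] at hi; omega
  rw [Function.update_of_ne hne]

lemma psiSum_pos (n : ℕ) (hn : 1 ≤ n) (b ρ : ℕ → ℝ)
    (hb : ∀ i ∈ Finset.Icc 1 n, 0 < b i)
    (hρ : ∀ i ∈ Finset.Icc 1 n, 0 < ρ i) (τ : ℝ) (ht : 0 < τ)
    (hlt : ∀ i ∈ Finset.Icc 1 n, b i * τ < 2*Real.pi) : 0 < psiSum n b ρ τ := by
  rw [psiSum0]
  apply Finset.sum_pos
  · intro i hi
    have h1 := hρ i hi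
    exact mul_pos (by positivity) (term_pos (hb i hi) ht (hlt i hi))
  · exact ⟨1, Finset.mem_Icc.2 ⟨le_rfl, hn⟩⟩

/-- Fix `n ≥ 2` and reals `b₁ > b₂ ≥ … ≥ bₙ > 0` and
`r₂, …, rₙ > 0`. Let `τ₁(r)` denote the least `τ > 0` such that
`sin(bᵢτ/2) ≠ 0` for all `i` and `ψ(τ, r) = 0` (for `r` with all coordinates
positive). Then `τ₁(r₁, r₂, …, rₙ) → 2π/b₁` as `r₁ → 0⁺`. -/
theorem statement10 (n : ℕ) (hn : 2 ≤ n) (b : ℕ → ℝ)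
    (hpos : ∀ i ∈ Finset.Icc 1 n, 0 < b i)
    (h12 : b 2 < b 1)
    (hanti : ∀ i j, 2 ≤ i → i ≤ j → j ≤ n → b j ≤ b i)
    (tau1 : (ℕ → ℝ) → ℝ)
    (htau1 : ∀ r : ℕ → ℝ, (∀ i ∈ Finset.Icc 1 n, 0 < r i) →
      IsLeast {τ : ℝ | 0 < τ ∧ (∀ i ∈ Finset.Icc 1 n, Real.sin (b i * τ / 2) ≠ 0) ∧
        psiSum n b r τ = 0} (tau1 r))
    (r : ℕ → ℝ) (hr : ∀ i ∈ Finset.Icc 2 n, 0 < r i) :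
    Filter.Tendsto (fun r₁ : ℝ => tau1 (Function.update r 1 r₁))
      (nhdsWithin 0 (Set.Ioi 0)) (nhds (2 * Real.pi / b 1)) := by
  have hπ := Real.pi_pos
  have hb1 : 0 < b 1 := hpos 1 (Finset.mem_Icc.2 ⟨le_rfl, by omega⟩)
  have hb2 : 0 < b 2 := hpos 2 (Finset.mem_Icc.2 ⟨by omega, hn⟩)
  set c : ℝ := 2 * Real.pi / b 1 with hc
  have hcpos : 0 < c := by positivity
  have hb1c : b 1 * c = 2 * Real.pi := by rw [hc]; field_simp
  have hb2c2 : b 2 * (2 * Real.pi / b 2) = 2 * Real.pi := by field_simp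
  have hc2 : c < 2 * Real.pi / b 2 := by
    rw [hc]
    exact div_lt_div_of_pos_left (by positivity) hb2 h12
  -- positivity of updated coordinates
  have hupd : ∀ r₁ : ℝ, 0 < r₁ → ∀ i ∈ Finset.Icc 1 n, 0 < Function.update r 1 r₁ i := by
    intro r₁ hr₁ i hi
    rcases eq_or_ne i 1 with h | h
    · subst h; rw [Function.update_self]; exact hr₁
    · rw [Function.update_of_ne h]
      exact hr i (by simp only [Finset.mem_Icc] at hi ⊢; omega)
  have hble : ∀ i ∈ Finset.Icc 1 n, b i ≤ b 1 := by
    intro i hi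
    simp only [Finset.mem_Icc] at hi
    rcases Nat.lt_or_ge i 2 with h | h
    · have : i = 1 := by omega
      subst this; exact le_rfl
    · exact le_trans (hanti 2 i le_rfl h hi.2) h12.le
  -- lower bound: tau1 (update r 1 r₁) > c for every r₁ > 0
  have hlow : ∀ r₁ : ℝ, 0 < r₁ → c < tau1 (Function.update r 1 r₁) := by
    intro r₁ hr₁
    obtain ⟨⟨ht0, hsin, hψ⟩, -⟩ := htau1 _ (hupd r₁ hr₁)
    set t := tau1 (Function.update r 1 r₁) with hT
    by_contra h
    push_neg at h
    rcases h.lt_or_eq with h' | h'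
    · have hlt : ∀ i ∈ Finset.Icc 1 n, b i * t < 2 * Real.pi := by
        intro i hi
        have h1 : b i * t ≤ b 1 * t := mul_le_mul_of_nonneg_right (hble i hi) ht0.le
        have h2 : b 1 * t < b 1 * c := mul_lt_mul_of_pos_left h' hb1
        linarith
      have := psiSum_pos n (by omega) b _ hpos (hupd r₁ hr₁) t ht0 hlt
      rw [hψ] at this
      exact lt_irrefl _ this
    · refine hsin 1 (Finset.mem_Icc.2 ⟨le_rfl, by omega⟩) ?_
      rw [h', show b 1 * c / 2 = Real.pi by linarith, Real.sin_pi]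
  rw [tendsto_order]
  constructor
  · intro l hl
    filter_upwards [self_mem_nhdsWithin] with r₁ hr₁
    exact lt_trans hl (hlow r₁ hr₁)
  · intro u hu
    set m := min u (min (2 * Real.pi / b 2) (2 * c)) with hm
    have hcm : c < m := lt_min hu (lt_min hc2 (by linarith))
    set t' := (c + m) / 2 with ht'
    have hct' : c < t' := by rw [ht']; linarith
    have ht'm : t' < m := by rw [ht']; linarith
    have ht'u : t' < u := lt_of_lt_of_le ht'm (min_le_left _ _)
    have ht'2 : t' < 2 * Real.pi / b 2 :=
      lt_of_lt_of_le ht'm (le_trans (min_le_right _ _) (min_le_left _ _))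
    have ht'c2 : t' < 2 * c :=
      lt_of_lt_of_le ht'm (le_trans (min_le_right _ _) (min_le_right _ _))
    have ht'pos : 0 < t' := lt_trans hcpos hct'
    -- nonvanishing of the sines on (c, t']
    have hsinne : ∀ τ, c < τ → τ ≤ t' → ∀ i ∈ Finset.Icc 1 n, Real.sin (b i * τ / 2) ≠ 0 := by
      intro τ h1 h2 i hi
      have hτpos : 0 < τ := lt_trans hcpos h1
      rcases Nat.lt_or_ge i 2 with h | h
      · have hi1 : i = 1 := by simp only [Finset.mem_Icc] at hi; omega
        subst hi1
        have hgt : Real.pi < b 1 * τ / 2 := by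
          have := mul_lt_mul_of_pos_left h1 hb1
          linarith
        have hlt2 : b 1 * τ / 2 < 2 * Real.pi := by
          have := mul_lt_mul_of_pos_left (lt_of_le_of_lt h2 ht'c2) hb1
          linarith
        have hneg := Real.sin_neg_of_neg_of_neg_pi_lt
          (x := b 1 * τ / 2 - 2 * Real.pi) (by linarith) (by linarith)
        rw [Real.sin_sub_two_pi] at hneg
        exact hneg.ne
      · have hin : i ≤ n := (Finset.mem_Icc.1 hi).2
        have hbi : b i ≤ b 2 := hanti 2 i le_rfl h hin
        have hbipos : 0 < b i := hpos i hi
        have hup : b i * τ / 2 < Real.pi := by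
          have h3 : b i * τ ≤ b 2 * τ := mul_le_mul_of_nonneg_right hbi hτpos.le
          have h4 : b 2 * τ < b 2 * (2 * Real.pi / b 2) :=
            mul_lt_mul_of_pos_left (lt_of_le_of_lt h2 ht'2) hb2
          rw [hb2c2] at h4
          linarith
        exact (Real.sin_pos_of_pos_of_lt_pi (by positivity) hup).ne'
    -- the tail sum at t'
    set S := ∑ i ∈ Finset.Icc 2 n, (r i)^2/2 *
        (3*t' - b i*t'^2*Real.cos (b i*t'/2)/Real.sin (b i*t'/2) - Real.sin (b i*t')/b i)
      with hS
    have hSpos : 0 < S := by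
      rw [hS]
      apply Finset.sum_pos
      · intro i hi
        have hi' : i ∈ Finset.Icc 1 n := by
          simp only [Finset.mem_Icc] at hi ⊢; omega
        have h1 := hr i hi
        have hbipos : 0 < b i := hpos i hi'
        have hbi : b i ≤ b 2 := hanti 2 i le_rfl (Finset.mem_Icc.1 hi).1 (Finset.mem_Icc.1 hi).2
        refine mul_pos (by positivity) (term_pos hbipos ht'pos ?_)
        have h3 : b i * t' ≤ b 2 * t' := mul_le_mul_of_nonneg_right hbi ht'pos.le
        have h4 : b 2 * t' < b 2 * (2 * Real.pi / b 2) := mul_lt_mul_of_pos_left ht'2 hb2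
        rw [hb2c2] at h4
        linarith
      · exact ⟨2, Finset.mem_Icc.2 ⟨le_rfl, hn⟩⟩
    set F := 3*t' - b 1*t'^2*Real.cos (b 1*t'/2)/Real.sin (b 1*t'/2) - Real.sin (b 1*t')/b 1
      with hF
    set ρ := Real.sqrt (S / (|F| + 1)) with hρ
    have hρpos : 0 < ρ := Real.sqrt_pos.2 (by positivity)
    filter_upwards [Ioo_mem_nhdsGT_of_mem (Set.left_mem_Ico.2 hρpos)] with r₁ hr₁
    have hr₁pos : 0 < r₁ := hr₁.1
    -- psiSum at t' is positive
    have hψval : psiSum n b (Function.update r 1 r₁) t' = r₁^2/2 * F + S := by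
      rw [psiSum_update n (by omega) b r r₁ t', ← hF, ← hS]
    have hr2 : r₁^2 < S / (|F| + 1) := by
      have h1 : r₁^2 < ρ^2 := by nlinarith [hr₁.2, hr₁.1]
      rwa [hρ, Real.sq_sqrt (by positivity)] at h1
    have habs : r₁^2/2 * |F| < S := by
      rw [lt_div_iff₀ (by positivity)] at hr2
      nlinarith [abs_nonneg F, sq_nonneg r₁]
    have hψt' : 0 < psiSum n b (Function.update r 1 r₁) t' := by
      rw [hψval]
      have hmul := mul_le_mul_of_nonneg_left (neg_abs_le F) (by positivity : (0:ℝ) ≤ r₁^2/2)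
      nlinarith [habs, hmul]
    -- psiSum tends to -∞ as τ → c⁺
    have hBot : Tendsto (fun τ => psiSum n b (Function.update r 1 r₁) τ)
        (nhdsWithin c (Set.Ioi c)) atBot := by
      have h1 : Tendsto (fun τ => r₁^2/2 *
          (3*τ - b 1*τ^2*Real.cos (b 1*τ/2)/Real.sin (b 1*τ/2) - Real.sin (b 1*τ)/b 1))
          (nhdsWithin c (Set.Ioi c)) atBot :=
        Filter.Tendsto.const_mul_atBot (by positivity) (psi_term1_atBot hb1)
      have h2 : Tendsto (fun τ => ∑ i ∈ Finset.Icc 2 n, (r i)^2/2 *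
          (3*τ - b i*τ^2*Real.cos (b i*τ/2)/Real.sin (b i*τ/2) - Real.sin (b i*τ)/b i))
          (nhdsWithin c (Set.Ioi c)) (nhds (∑ i ∈ Finset.Icc 2 n, (r i)^2/2 *
          (3*c - b i*c^2*Real.cos (b i*c/2)/Real.sin (b i*c/2) - Real.sin (b i*c)/b i))) := by
        have hK : ContinuousOn (fun τ => ∑ i ∈ Finset.Icc 2 n, (r i)^2/2 *
            (3*τ - b i*τ^2*Real.cos (b i*τ/2)/Real.sin (b i*τ/2) - Real.sin (b i*τ)/b i))
            (Set.Ioo 0 (2 * Real.pi / b 2)) := by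
          apply psi_aux_contOn
          intro τ hτ i hi
          have hbi : b i ≤ b 2 := hanti 2 i le_rfl (Finset.mem_Icc.1 hi).1 (Finset.mem_Icc.1 hi).2
          have hbipos : 0 < b i := hpos i (by simp only [Finset.mem_Icc] at hi ⊢; omega)
          have hup : b i * τ / 2 < Real.pi := by
            have h3 : b i * τ ≤ b 2 * τ := mul_le_mul_of_nonneg_right hbi hτ.1.le
            have h4 : b 2 * τ < b 2 * (2 * Real.pi / b 2) := mul_lt_mul_of_pos_left hτ.2 hb2
            rw [hb2c2] at h4
            linarith
          exact (Real.sin_pos_of_pos_of_lt_pi (by have := hτ.1; positivity) hup).ne'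
        have hmem : Set.Ioo 0 (2 * Real.pi / b 2) ∈ nhds c :=
          isOpen_Ioo.mem_nhds ⟨hcpos, hc2⟩
        exact ((hK.continuousAt hmem).tendsto).mono_left nhdsWithin_le_nhds
      have h3 := h1.atBot_add h2
      refine h3.congr fun τ => ?_
      rw [psiSum_update n (by omega) b r r₁ τ]
    have hneg : ∀ᶠ τ in nhdsWithin c (Set.Ioi c),
        psiSum n b (Function.update r 1 r₁) τ < 0 :=
      hBot.eventually (Filter.eventually_lt_atBot 0)
    have hIoo : ∀ᶠ τ in nhdsWithin c (Set.Ioi c), τ ∈ Set.Ioo c t' :=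
      eventually_of_mem (Ioo_mem_nhdsGT_of_mem (Set.left_mem_Ico.2 hct')) fun _ h => h
    obtain ⟨a, ha1, ha2⟩ := (hneg.and hIoo).exists
    -- IVT on [a, t']
    have hK : ∀ τ ∈ Set.Icc a t', ∀ i ∈ Finset.Icc 1 n, Real.sin (b i * τ / 2) ≠ 0 :=
      fun τ hτ => hsinne τ (lt_of_lt_of_le ha2.1 hτ.1) hτ.2
    have hcont : ContinuousOn (psiSum n b (Function.update r 1 r₁)) (Set.Icc a t') := by
      have := psi_aux_contOn (Finset.Icc 1 n) b (Function.update r 1 r₁) (Set.Icc a t') hK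
      exact this
    have h0mem : (0:ℝ) ∈ Set.Icc (psiSum n b (Function.update r 1 r₁) a)
        (psiSum n b (Function.update r 1 r₁) t') := ⟨ha1.le, hψt'.le⟩
    obtain ⟨z, hz, hz0⟩ := intermediate_value_Icc ha2.2.le hcont h0mem
    have hzc : c < z := lt_of_lt_of_le ha2.1 hz.1
    have hle : tau1 (Function.update r 1 r₁) ≤ z :=
      (htau1 _ (hupd r₁ hr₁pos)).2 ⟨lt_trans hcpos hzc, fun i hi => hK z hz i hi, hz0⟩
    calc tau1 (Function.update r 1 r₁) ≤ z := hle
      _ ≤ t' := hz.2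
      _ < u := ht'u
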